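/- For every f ∈ ℝ^V, the function α ↦ ‖u_α‖₂ mapping the regularization parameter to the ℓ² norm of the ROF minimizer is nonincreasing on [0,∞): if 0 ≤ β₁ ≤ β₂ then ‖u_{β₂}‖₂ ≤ ‖u_{β₁}‖₂. -/
import Mathlib


open Finset MeasureTheory

noncomputable section

/-- The graph total variation `J(u) = ∑_{(v,w) ∈ E} |u(w) - u(v)|`. -/
def tvJ {V : Type*} (E : Finset (V × V)) (u : V → ℝ) : ℝ :=
  ∑ e ∈ E, |u e.2 - u e.1|

/-- The subdifferential of the graph total variation at `u`. -/
def subdiffJ {V : Type*} [Fintype V] (E : Finset (V × V)) (u : V → ℝ) : Set (V → ℝ) :=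
  {us | ∀ h : V → ℝ, (∑ v, (h v - u v) * us v) + tvJ E u ≤ tvJ E h}

/-- The divergence of an edge function `H`:
`(div H)(v) = ∑_{(w,v) ∈ E} H((w,v)) - ∑_{(v,w) ∈ E} H((v,w))`. -/
def gdiv {V : Type*} [DecidableEq V] (E : Finset (V × V)) (H : V × V → ℝ) : V → ℝ :=
  fun v => (∑ e ∈ E, if e.2 = v then H e else 0) - (∑ e ∈ E, if e.1 = v then H e else 0)

/-- The ℓ² norm on `ℝ^V`. -/
def norm2 {V : Type*} [Fintype V] (u : V → ℝ) : ℝ :=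
  Real.sqrt (∑ v, (u v) ^ 2)

/-- `u` minimizes `w ↦ ½‖f - w‖₂² + α J(w)` over `ℝ^V`. -/
def IsROFMinimizer {V : Type*} [Fintype V] (E : Finset (V × V)) (f : V → ℝ) (α : ℝ)
    (u : V → ℝ) : Prop :=
  ∀ w : V → ℝ,
    (1 / 2) * (∑ v, (f v - u v) ^ 2) + α * tvJ E u ≤
      (1 / 2) * (∑ v, (f v - w v) ^ 2) + α * tvJ E w

/-- `u : [0,∞) → ℝ^V` is a TV flow solution with datum `f`: it is Lipschitz on `[0,∞)`,
`u(0) = f`, and `-u'(t) ∈ ∂J(u(t))` for almost every `t > 0`. -/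
def IsTVFlowSolution {V : Type*} [Fintype V] (E : Finset (V × V)) (f : V → ℝ)
    (u : ℝ → V → ℝ) : Prop :=
  u 0 = f ∧ (∃ L : NNReal, LipschitzOnWith L u (Set.Ici 0)) ∧
    ∃ u' : ℝ → V → ℝ, ∀ᵐ t ∂(volume : Measure ℝ), 0 < t →
      HasDerivAt u (u' t) t ∧ (fun v => -(u' t v)) ∈ subdiffJ E (u t)

lemma tvJ_nonneg' {V : Type*} (E : Finset (V × V)) (u : V → ℝ) : 0 ≤ tvJ E u :=
  Finset.sum_nonneg fun _ _ => abs_nonneg _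

lemma tvJ_convex' {V : Type*} (E : Finset (V × V)) (u h : V → ℝ) {t : ℝ}
    (ht0 : 0 ≤ t) (ht1 : t ≤ 1) :
    tvJ E (fun v => u v + t * (h v - u v)) ≤ (1 - t) * tvJ E u + t * tvJ E h := by
  unfold tvJ
  rw [Finset.mul_sum, Finset.mul_sum, ← Finset.sum_add_distrib]
  refine Finset.sum_le_sum fun e _ => ?_
  have heq : (u e.2 + t * (h e.2 - u e.2)) - (u e.1 + t * (h e.1 - u e.1))
      = (1 - t) * (u e.2 - u e.1) + t * (h e.2 - h e.1) := by ring
  rw [heq]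
  calc |(1 - t) * (u e.2 - u e.1) + t * (h e.2 - h e.1)|
      ≤ |(1 - t) * (u e.2 - u e.1)| + |t * (h e.2 - h e.1)| := abs_add_le _ _
    _ = (1 - t) * |u e.2 - u e.1| + t * |h e.2 - h e.1| := by
        rw [abs_mul, abs_mul, abs_of_nonneg (by linarith), abs_of_nonneg ht0]

/-- The variational inequality satisfied by an ROF minimizer. -/
lemma rof_varineq {V : Type*} [Fintype V] (E : Finset (V × V)) (f : V → ℝ) {α : ℝ}
    (hα : 0 ≤ α) (u : V → ℝ) (hu : IsROFMinimizer E f α u) (h : V → ℝ) :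
    (∑ v, (f v - u v) * (h v - u v)) ≤ α * (tvJ E h - tvJ E u) := by
  set S := ∑ v, (f v - u v) * (h v - u v) with hS
  set Q := ∑ v, (h v - u v) ^ 2 with hQdef
  have hQ : 0 ≤ Q := Finset.sum_nonneg fun v _ => sq_nonneg _
  have key : ∀ t : ℝ, 0 < t → t ≤ 1 → S ≤ t / 2 * Q + α * (tvJ E h - tvJ E u) := by
    intro t ht0 ht1
    have h1 := hu (fun v => u v + t * (h v - u v))
    have h2 := mul_le_mul_of_nonneg_left (tvJ_convex' E u h ht0.le ht1) hα
    have expand : (∑ v, (f v - (u v + t * (h v - u v))) ^ 2)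
        = (∑ v, (f v - u v) ^ 2) - 2 * t * S + t ^ 2 * Q := by
      rw [hS, hQdef, Finset.mul_sum, Finset.mul_sum, ← Finset.sum_sub_distrib,
        ← Finset.sum_add_distrib]
      exact Finset.sum_congr rfl fun v _ => by ring
    rw [expand] at h1
    have h3 : t * S ≤ t * (t / 2 * Q + α * (tvJ E h - tvJ E u)) := by nlinarith
    exact le_of_mul_le_mul_left h3 ht0
  refine le_of_forall_pos_le_add fun ε hε => ?_
  have htpos : 0 < min 1 (2 * ε / (Q + 1)) := by positivity
  have htle : min 1 (2 * ε / (Q + 1)) ≤ 1 := min_le_left _ _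
  have := key _ htpos htle
  have h4 : min 1 (2 * ε / (Q + 1)) ≤ 2 * ε / (Q + 1) := min_le_right _ _
  have h5 : min 1 (2 * ε / (Q + 1)) / 2 * Q ≤ ε := by
    rw [div_mul_eq_mul_div, div_le_iff₀ (by norm_num : (0:ℝ) < 2)]
    calc min 1 (2 * ε / (Q + 1)) * Q ≤ 2 * ε / (Q + 1) * Q :=
          mul_le_mul_of_nonneg_right h4 hQ
      _ ≤ ε * 2 := by
          rw [div_mul_eq_mul_div, div_le_iff₀ (by positivity : (0:ℝ) < Q + 1)]
          nlinarith
  linarith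

lemma tvJ_two {V : Type*} (E : Finset (V × V)) (u : V → ℝ) :
    tvJ E (fun v => 2 * u v) = 2 * tvJ E u := by
  unfold tvJ
  rw [Finset.mul_sum]
  exact Finset.sum_congr rfl fun e _ => by
    rw [← mul_sub, abs_mul]; norm_num

lemma tvJ_zero {V : Type*} (E : Finset (V × V)) :
    tvJ E (0 : V → ℝ) = 0 := by
  unfold tvJ; simp

/-- the ℓ² norm of the ROF minimizer is nonincreasing as a function of the
regularization parameter. -/
theorem rof_norm_nonincreasing
    {V : Type*} [Fintype V] [DecidableEq V] [Nonempty V] (E : Finset (V × V))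
    (hE : ∀ v w : V, (v, w) ∈ E → (w, v) ∉ E)
    (hconn : (SimpleGraph.fromRel (fun v w : V => (v, w) ∈ E)).Connected)
    (f : V → ℝ) (β₁ β₂ : ℝ) (hβ₁ : 0 ≤ β₁) (hβ : β₁ ≤ β₂)
    (u₁ u₂ : V → ℝ) (hu₁ : IsROFMinimizer E f β₁ u₁) (hu₂ : IsROFMinimizer E f β₂ u₂) :
    norm2 u₂ ≤ norm2 u₁ := by
  have hβ₂ : 0 ≤ β₂ := le_trans hβ₁ hβ
  have hJ2 : 0 ≤ tvJ E u₂ := tvJ_nonneg' E u₂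
  -- from u₂'s inequality with h = 0 : β₂ J(u₂) ≤ ⟨f - u₂, u₂⟩
  have A : β₂ * tvJ E u₂ ≤ ∑ v, (f v - u₂ v) * u₂ v := by
    have := rof_varineq E f hβ₂ u₂ hu₂ 0
    rw [tvJ_zero] at this
    have hsum : (∑ v, (f v - u₂ v) * ((0 : V → ℝ) v - u₂ v))
        = -(∑ v, (f v - u₂ v) * u₂ v) := by
      rw [← Finset.sum_neg_distrib]
      exact Finset.sum_congr rfl fun v _ => by simp only [Pi.zero_apply]; ring
    rw [hsum] at this
    linarith
  -- from u₁'s inequality with h = u₂ and h = 2u₁ : ⟨f - u₁, u₂⟩ ≤ β₁ J(u₂)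
  have B : (∑ v, (f v - u₁ v) * u₂ v) ≤ β₁ * tvJ E u₂ := by
    have h1 := rof_varineq E f hβ₁ u₁ hu₁ u₂
    have h2 := rof_varineq E f hβ₁ u₁ hu₁ (fun v => 2 * u₁ v)
    rw [tvJ_two] at h2
    have hsum2 : (∑ v, (f v - u₁ v) * ((fun v => 2 * u₁ v) v - u₁ v))
        = ∑ v, (f v - u₁ v) * u₁ v :=
      Finset.sum_congr rfl fun v _ => by ring
    rw [hsum2] at h2
    have hsplit : (∑ v, (f v - u₁ v) * u₂ v)
        = (∑ v, (f v - u₁ v) * (u₂ v - u₁ v)) + ∑ v, (f v - u₁ v) * u₁ v := by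
      rw [← Finset.sum_add_distrib]
      exact Finset.sum_congr rfl fun v _ => by ring
    rw [hsplit]
    linarith
  -- hence ⟨u₂, u₂⟩ ≤ ⟨u₁, u₂⟩
  set a := ∑ v, (u₁ v) ^ 2 with ha
  set b := ∑ v, (u₂ v) ^ 2 with hb
  set s := ∑ v, u₁ v * u₂ v with hs
  have hbnn : 0 ≤ b := Finset.sum_nonneg fun v _ => sq_nonneg _
  have hann : 0 ≤ a := Finset.sum_nonneg fun v _ => sq_nonneg _
  have hbs : b ≤ s := by
    have hsplitA : (∑ v, (f v - u₂ v) * u₂ v) = (∑ v, f v * u₂ v) - b := by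
      rw [hb, ← Finset.sum_sub_distrib]
      exact Finset.sum_congr rfl fun v _ => by ring
    have hsplitB : (∑ v, (f v - u₁ v) * u₂ v) = (∑ v, f v * u₂ v) - s := by
      rw [hs, ← Finset.sum_sub_distrib]
      exact Finset.sum_congr rfl fun v _ => by ring
    rw [hsplitA] at A
    rw [hsplitB] at B
    nlinarith
  -- Cauchy–Schwarz : s² ≤ a * b
  have hcs : s ^ 2 ≤ a * b := by
    rw [ha, hb, hs]
    exact Finset.sum_mul_sq_le_sq_mul_sq Finset.univ u₁ u₂
  have hba : b ≤ a := by nlinarith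
  unfold norm2
  exact Real.sqrt_le_sqrt hba
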